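/- Let E be a separable Hilbert space over ℝ, let q : E → E be a k-points NN quantizer, let q⋆ : E → E be any map, and let λ > 0. Then for every x ∈ E, writing x_λ = x + λ(x − q⋆(x)), one has |q⋆(x) − q(x)|² ≤ ((1+λ)/λ)·(|x − q(x)|² − |x − q⋆(x)|²) + (1/λ)·(|x_λ − q⋆(x)|² − |x_λ − q(x_λ)|²). -/

import Mathlib

/-- the pointwise inequality at the start of the proof of Theorem `thm:absmarg`.
Here `q` is a `k`-points NN quantizer (a map with image a set of exactly `k` points mapping each
point to a nearest point of its image) and `qs` is an arbitrary map. -/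
theorem stmt14 {E : Type*} [NormedAddCommGroup E] [InnerProductSpace ℝ E]
    (k : ℕ) (q : E → E)
    (hqim : ∃ s : Finset E, s.card = k ∧ Set.range q = ↑s)
    (hqNN : ∀ x : E, ∀ c ∈ Set.range q, ‖x - q x‖ ≤ ‖x - c‖)
    (qs : E → E) (lam : ℝ) (hlam : 0 < lam) (x : E) :
    ‖qs x - q x‖ ^ 2 ≤
      ((1 + lam) / lam) * (‖x - q x‖ ^ 2 - ‖x - qs x‖ ^ 2) +
        (1 / lam) * (‖(x + lam • (x - qs x)) - qs x‖ ^ 2 -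
          ‖(x + lam • (x - qs x)) - q (x + lam • (x - qs x))‖ ^ 2) := by
  set a := x - q x with ha
  set b := x - qs x with hb
  set xl := x + lam • b with hxl
  -- NN property at xl against the center q x
  have hNN : ‖xl - q xl‖ ≤ ‖xl - q x‖ := hqNN xl (q x) ⟨x, rfl⟩
  have hNNsq : ‖xl - q xl‖ ^ 2 ≤ ‖xl - q x‖ ^ 2 :=
    pow_le_pow_left₀ (norm_nonneg _) hNN 2
  have h1 : xl - qs x = (1 + lam) • b := by
    rw [hxl, hb]; module
  have h2 : xl - q x = a + lam • b := by
    rw [hxl, ha, hb]; module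
  have h3 : qs x - q x = a - b := by
    rw [ha, hb]; abel
  have e1 : ‖xl - qs x‖ ^ 2 = (1 + lam) ^ 2 * ‖b‖ ^ 2 := by
    rw [h1, norm_smul, mul_pow, Real.norm_eq_abs, sq_abs]
  have e2 : ‖a + lam • b‖ ^ 2 =
      ‖a‖ ^ 2 + 2 * lam * inner ℝ a b + lam ^ 2 * ‖b‖ ^ 2 := by
    rw [norm_add_sq_real, real_inner_smul_right, norm_smul,
      Real.norm_eq_abs, mul_pow, sq_abs]
    ring
  have e3 : ‖a - b‖ ^ 2 = ‖a‖ ^ 2 - 2 * inner ℝ a b + ‖b‖ ^ 2 :=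
    norm_sub_sq_real a b
  rw [h3, e3]
  rw [h2] at hNNsq
  rw [e1]
  have hlam' : lam ≠ 0 := ne_of_gt hlam
  have hcomb : (1 + lam) / lam * (‖a‖ ^ 2 - ‖b‖ ^ 2) +
      1 / lam * ((1 + lam) ^ 2 * ‖b‖ ^ 2 - ‖xl - q xl‖ ^ 2) =
      ((1 + lam) * (‖a‖ ^ 2 - ‖b‖ ^ 2) +
        ((1 + lam) ^ 2 * ‖b‖ ^ 2 - ‖xl - q xl‖ ^ 2)) / lam := by
    field_simp
  rw [hcomb, le_div_iff₀ hlam]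
  nlinarith [hNNsq, e2]
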